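/- The position S₁ + S₂ (one strip of length 1 plus one strip of length 2) is equivalent to the zero game modulo the universe of Partizan Kayles positions: for every Partizan Kayles position X, o⁻(S₁ + S₂ + X) = o⁻(X). -/

import Mathlib

/-- Add a strip of length `k` to a position (strips of length 0 are discarded). -/
def addStrip (m : Multiset ℕ) (k : ℕ) : Multiset ℕ := if k = 0 then m else k ::ₘ m

/-- Left removes one square from a strip of length `n ≥ 1`, leaving strips `i` and `n-1-i`. -/
def LeftMove (G G' : Multiset ℕ) : Prop :=
  ∃ n ∈ G, ∃ i, i + 1 ≤ n ∧ G' = addStrip (addStrip (G.erase n) i) (n - 1 - i)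

/-- Right removes two adjacent squares from a strip of length `n ≥ 2`, leaving `i` and `n-2-i`. -/
def RightMove (G G' : Multiset ℕ) : Prop :=
  ∃ n ∈ G, ∃ i, i + 2 ≤ n ∧ G' = addStrip (addStrip (G.erase n) i) (n - 2 - i)

mutual
  /-- Misère play: Left, to move, wins (a player unable to move wins). -/
  inductive LeftWinsMover : Multiset ℕ → Prop
    | cannot (G : Multiset ℕ) : (¬ ∃ G', LeftMove G G') → LeftWinsMover G
    | move (G G' : Multiset ℕ) : LeftMove G G' → LeftWinsWaiter G' → LeftWinsMover G
  /-- Misère play: Left wins with Right to move. -/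
  inductive LeftWinsWaiter : Multiset ℕ → Prop
    | intro (G : Multiset ℕ) : (∃ G', RightMove G G') →
        (∀ G', RightMove G G' → LeftWinsMover G') → LeftWinsWaiter G
end

inductive Outcome | L | N | P | R
  deriving DecidableEq

open Classical in
/-- The misère outcome `o⁻(G)`. -/
noncomputable def outcome (G : Multiset ℕ) : Outcome :=
  if LeftWinsMover G then (if LeftWinsWaiter G then Outcome.L else Outcome.N)
  else (if LeftWinsWaiter G then Outcome.P else Outcome.R)

/-- The partial order on outcomes: `L` greatest, `R` least, `N` and `P` incomparable. -/
def Outcome.le (a b : Outcome) : Prop := a = b ∨ a = Outcome.R ∨ b = Outcome.L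

/-- `pos k j` is the position `kS₁ + jS₂`. -/
def pos (k j : ℕ) : Multiset ℕ := Multiset.replicate k 1 + Multiset.replicate j 2

def fK (n : ℕ) : ℤ := if n % 3 = 2 then 1 else if n % 3 = 1 then -1 else 0

def dK (G : Multiset ℕ) : ℤ := (G.map fK).sum

lemma addStrip_sum (m : Multiset ℕ) (k : ℕ) : (addStrip m k).sum = m.sum + k := by
  unfold addStrip; split <;> simp [*] <;> omega

lemma dK_addStrip (m : Multiset ℕ) (k : ℕ) : dK (addStrip m k) = dK m + fK k := by
  unfold addStrip dK
  split
  · simp [*, show fK 0 = 0 from rfl]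
  · simp; ring

lemma dK_erase {G : Multiset ℕ} {n : ℕ} (h : n ∈ G) : dK G = fK n + dK (G.erase n) := by
  conv_lhs => rw [← Multiset.cons_erase h]
  simp [dK]

lemma sum_erase' {G : Multiset ℕ} {n : ℕ} (h : n ∈ G) : G.sum = n + (G.erase n).sum := by
  conv_lhs => rw [← Multiset.cons_erase h]
  simp

lemma mk_left {G : Multiset ℕ} {n : ℕ} (hn : n ∈ G) (i : ℕ) (hi : i + 1 ≤ n) :
    LeftMove G (addStrip (addStrip (G.erase n) i) (n-1-i)) ∧
    dK (addStrip (addStrip (G.erase n) i) (n-1-i)) = dK G - fK n + fK i + fK (n-1-i) ∧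
    (addStrip (addStrip (G.erase n) i) (n-1-i)).sum + 1 = G.sum := by
  refine ⟨⟨n, hn, i, hi, rfl⟩, ?_, ?_⟩
  · rw [dK_addStrip, dK_addStrip, dK_erase hn]; ring
  · rw [addStrip_sum, addStrip_sum, sum_erase' hn]; omega

lemma mk_right {G : Multiset ℕ} {n : ℕ} (hn : n ∈ G) (i : ℕ) (hi : i + 2 ≤ n) :
    RightMove G (addStrip (addStrip (G.erase n) i) (n-2-i)) ∧
    dK (addStrip (addStrip (G.erase n) i) (n-2-i)) = dK G - fK n + fK i + fK (n-2-i) ∧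
    (addStrip (addStrip (G.erase n) i) (n-2-i)).sum + 2 = G.sum := by
  refine ⟨⟨n, hn, i, hi, rfl⟩, ?_, ?_⟩
  · rw [dK_addStrip, dK_addStrip, dK_erase hn]; ring
  · rw [addStrip_sum, addStrip_sum, sum_erase' hn]; omega

lemma fK_left_cases {i j n : ℕ} (h : i + j + 1 = n) :
    fK i + fK j - fK n = 1 ∨ fK i + fK j - fK n = -2 := by
  have hi : i % 3 = 0 ∨ i % 3 = 1 ∨ i % 3 = 2 := by omega
  have hj : j % 3 = 0 ∨ j % 3 = 1 ∨ j % 3 = 2 := by omega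
  have hn : n % 3 = 0 ∨ n % 3 = 1 ∨ n % 3 = 2 := by omega
  rcases hi with h1|h1|h1 <;> rcases hj with h2|h2|h2 <;> rcases hn with h3|h3|h3 <;>
    simp [fK, h1, h2, h3] <;> omega

lemma fK_right_cases {i j n : ℕ} (h : i + j + 2 = n) :
    fK i + fK j - fK n = -1 ∨ fK i + fK j - fK n = 2 := by
  have hi : i % 3 = 0 ∨ i % 3 = 1 ∨ i % 3 = 2 := by omega
  have hj : j % 3 = 0 ∨ j % 3 = 1 ∨ j % 3 = 2 := by omega
  have hn : n % 3 = 0 ∨ n % 3 = 1 ∨ n % 3 = 2 := by omega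
  rcases hi with h1|h1|h1 <;> rcases hj with h2|h2|h2 <;> rcases hn with h3|h3|h3 <;>
    simp [fK, h1, h2, h3] <;> omega

lemma left_d {G G' : Multiset ℕ} (h : LeftMove G G') :
    G'.sum + 1 = G.sum ∧ (dK G' = dK G + 1 ∨ dK G' = dK G - 2) := by
  obtain ⟨n, hn, i, hi, rfl⟩ := h
  obtain ⟨-, hd, hs⟩ := mk_left hn i hi
  refine ⟨hs, ?_⟩
  have := fK_left_cases (i := i) (j := n - 1 - i) (n := n) (by omega)
  omega

lemma right_d {G G' : Multiset ℕ} (h : RightMove G G') :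
    G'.sum + 2 = G.sum ∧ (dK G' = dK G - 1 ∨ dK G' = dK G + 2) := by
  obtain ⟨n, hn, i, hi, rfl⟩ := h
  obtain ⟨-, hd, hs⟩ := mk_right hn i hi
  refine ⟨hs, ?_⟩
  have := fK_right_cases (i := i) (j := n - 2 - i) (n := n) (by omega)
  omega

lemma fK_pos {x : ℕ} (h : 0 < fK x) : x % 3 = 2 := by
  by_contra hc; simp [fK, hc] at h; split at h <;> omega

lemma dK_le_zero {G : Multiset ℕ} (h : ∀ x ∈ G, fK x ≤ 0) : dK G ≤ 0 := by
  induction G using Multiset.induction_on with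
  | empty => simp [dK]
  | cons a s ih =>
      have := h a (Multiset.mem_cons_self a s)
      have h2 := ih (fun x hx => h x (Multiset.mem_cons_of_mem hx))
      simp only [dK, Multiset.map_cons, Multiset.sum_cons] at *
      omega

lemma dK_nonneg {G : Multiset ℕ} (h : ∀ x ∈ G, 0 ≤ fK x) : 0 ≤ dK G := by
  induction G using Multiset.induction_on with
  | empty => simp [dK]
  | cons a s ih =>
      have := h a (Multiset.mem_cons_self a s)
      have h2 := ih (fun x hx => h x (Multiset.mem_cons_of_mem hx))
      simp only [dK, Multiset.map_cons, Multiset.sum_cons] at *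
      omega

theorem charK : ∀ N : ℕ, ∀ G : Multiset ℕ, G.sum = N →
    (LeftWinsMover G ↔ (0 ≤ dK G ∧ dK G % 3 = 0)) ∧
    (LeftWinsWaiter G ↔ (1 ≤ dK G ∧ dK G % 3 = 1)) := by
  intro N
  induction N using Nat.strong_induction_on with
  | _ N IH =>
  intro G hG
  have IHm : ∀ G' : Multiset ℕ, G'.sum < N →
      (LeftWinsMover G' ↔ (0 ≤ dK G' ∧ dK G' % 3 = 0)) := fun G' h => (IH _ h G' rfl).1
  have IHw : ∀ G' : Multiset ℕ, G'.sum < N →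
      (LeftWinsWaiter G' ↔ (1 ≤ dK G' ∧ dK G' % 3 = 1)) := fun G' h => (IH _ h G' rfl).2
  constructor
  · constructor
    · intro h
      cases h with
      | cannot _ hno =>
          have hall : ∀ x ∈ G, x = 0 := by
            intro x hx
            by_contra hx0
            exact hno ⟨_, x, hx, 0, by omega, rfl⟩
          have hd0 : dK G = 0 := by
            apply Multiset.sum_eq_zero
            intro y hy
            obtain ⟨x, hx, rfl⟩ := Multiset.mem_map.mp hy
            rw [hall x hx]; rfl
          rw [hd0]; exact ⟨le_refl 0, rfl⟩
      | move _ G' hmv hW =>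
          obtain ⟨hsum, hd⟩ := left_d hmv
          have hlt : G'.sum < N := by omega
          have := (IHw G' hlt).mp hW
          omega
    · rintro ⟨hge, hmod⟩
      by_cases hz : ∀ x ∈ G, x = 0
      · exact LeftWinsMover.cannot G (by
          rintro ⟨G', n, hn, i, hi, -⟩
          have := hz n hn; omega)
      · push_neg at hz
        obtain ⟨n, hn, hn0⟩ := hz
        by_cases hgood : ∃ m ∈ G, 1 ≤ m ∧ (m % 3 ≠ 2 ∨ 5 ≤ m)
        · obtain ⟨m, hm, hm1, hm2⟩ := hgood
          by_cases hr : m % 3 = 2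
          · -- m ≥ 5, take i = 2
            have h5 : 5 ≤ m := by tauto
            obtain ⟨hmv, hd, hs⟩ := mk_left hm 2 (by omega)
            have hfi : fK 2 = 1 := rfl
            have hfj : fK (m - 1 - 2) = 1 := by
              have : (m - 1 - 2) % 3 = 2 := by omega
              simp [fK, this]
            have hfn : fK m = 1 := by simp [fK, hr]
            refine LeftWinsMover.move G _ hmv ((IHw _ (by omega)).mpr ?_)
            rw [hd, hfi, hfj, hfn]; omega
          · obtain ⟨hmv, hd, hs⟩ := mk_left hm 0 (by omega)
            have hfi : fK 0 = 0 := rfl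
            have hdelta : fK 0 + fK (m - 1 - 0) - fK m = 1 := by
              have hcase : m % 3 = 0 ∨ m % 3 = 1 := by omega
              rcases hcase with hc | hc
              · have h1 : (m - 1) % 3 = 2 := by omega
                simp [fK, hc, h1]
              · have h1 : (m - 1) % 3 = 0 := by omega
                simp [fK, hc, h1]
            refine LeftWinsMover.move G _ hmv ((IHw _ (by omega)).mpr ?_)
            omega
        · push_neg at hgood
          have hall2 : ∀ x ∈ G, x = 0 ∨ x = 2 := by
            intro x hx
            rcases Nat.eq_zero_or_pos x with h0 | h1
            · exact Or.inl h0
            · have := hgood x hx h1; omega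
          have h2G : (2 : ℕ) ∈ G := by
            have := hall2 n hn
            rcases this with h | h
            · exact absurd h hn0
            · rwa [h] at hn
          have hge1 : 1 ≤ dK G := by
            rw [dK_erase h2G]
            have : 0 ≤ dK (G.erase 2) := by
              apply dK_nonneg
              intro x hx
              have := hall2 x (Multiset.mem_of_mem_erase hx)
              rcases this with h | h <;> simp [h, fK]
            have hf2 : fK 2 = 1 := rfl
            omega
          obtain ⟨hmv, hd, hs⟩ := mk_left h2G 0 (by omega)
          have hdelta : dK (addStrip (addStrip (G.erase 2) 0) (2 - 1 - 0)) = dK G - 2 := by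
            rw [hd]; norm_num [fK]; ring
          refine LeftWinsMover.move G _ hmv ((IHw _ (by omega)).mpr ?_)
          rw [hdelta]; omega
  · constructor
    · intro h
      cases h with
      | intro _ hex hall =>
          obtain ⟨G₀, n, hn, i, hi, -⟩ := hex
          have hn2 : 2 ≤ n := by omega
          set i' : ℕ := if n % 3 = 1 then 1 else 0 with hi'
          have hile : i' + 2 ≤ n := by
            by_cases hc : n % 3 = 1 <;> simp [hi', hc] <;> omega
          obtain ⟨hmv, hd, hs⟩ := mk_right hn i' hile
          have hdelta : fK i' + fK (n - 2 - i') - fK n = -1 := by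
            have hcase : n % 3 = 0 ∨ n % 3 = 1 ∨ n % 3 = 2 := by omega
            rcases hcase with hc | hc | hc
            · have e1 : i' = 0 := by simp [hi', hc]
              have e2 : (n - 2) % 3 = 1 := by omega
              simp [e1, e2, fK, hc]
            · have e1 : i' = 1 := by simp [hi', hc]
              have e2 : (n - 2 - 1) % 3 = 1 := by omega
              simp [e1, e2, fK, hc]
            · have e1 : i' = 0 := by simp [hi', hc]
              have e2 : (n - 2) % 3 = 0 := by omega
              simp [e1, e2, fK, hc]
          have hLM := hall _ hmv
          have := (IHm _ (by omega)).mp hLM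
          omega
    · rintro ⟨hge, hmod⟩
      have hex : ∃ x ∈ G, 0 < fK x := by
        by_contra hc
        push_neg at hc
        have := dK_le_zero hc
        omega
      obtain ⟨x, hx, hfx⟩ := hex
      have hx2 : 2 ≤ x := by have := fK_pos hfx; omega
      refine LeftWinsWaiter.intro G ⟨_, x, hx, 0, by omega, rfl⟩ ?_
      intro G' hmv
      obtain ⟨hsum, hd⟩ := right_d hmv
      refine (IHm _ (by omega)).mpr ?_
      omega

theorem kayles_S1_plus_S2_equiv_zero :
    ∀ X : Multiset ℕ, 0 ∉ X → outcome (1 ::ₘ 2 ::ₘ X) = outcome X := by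
  intro X _
  have c := fun (G : Multiset ℕ) => charK G.sum G rfl
  have hd : dK (1 ::ₘ 2 ::ₘ X) = dK X := by
    simp only [dK, Multiset.map_cons, Multiset.sum_cons]
    norm_num [fK]
  have e1 : LeftWinsMover (1 ::ₘ 2 ::ₘ X) = LeftWinsMover X :=
    propext (by rw [(c _).1, (c _).1, hd])
  have e2 : LeftWinsWaiter (1 ::ₘ 2 ::ₘ X) = LeftWinsWaiter X :=
    propext (by rw [(c _).2, (c _).2, hd])
  unfold outcome
  rw [e1, e2]
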